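/- arXiv:1106.0491 — 3 statements merged into one kernel-verified Lean document; each statement's English description precedes it below -/
import Mathlib

section
/- Let μ be a finite measure on ℝ≥0 (the spectral measure dE_λ(f)) and for s ≥ 0 set G(s) = ∫₀^∞ λ e^{-2λs} dμ(λ). Suppose there exist constants C > 0 and α > 0 such that G(t) ≤ C e^{-2αt} for all t ≥ 0, and G(0) < ∞. Then G(s) ≤ e^{-2αs} G(0) for all s ≥ 0. -/
open MeasureTheory Filter

theorem stmt_4 (μ : Measure ℝ) [IsFiniteMeasure μ] (hsupp : μ (Set.Iio 0) = 0)
    (G : ℝ → ℝ) (hG : ∀ s, G s = ∫ l, l * Real.exp (-2 * l * s) ∂μ)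
    (hG0 : Integrable (fun l : ℝ => l) μ)
    (C α : ℝ) (hC : 0 < C) (hα : 0 < α)
    (hdecay : ∀ t : ℝ, 0 ≤ t → G t ≤ C * Real.exp (-2 * α * t)) :
    ∀ s : ℝ, 0 ≤ s → G s ≤ Real.exp (-2 * α * s) * G 0 := by
  have hae0 : ∀ᵐ l ∂μ, 0 ≤ l := by
    rw [ae_iff]
    convert hsupp using 2
    ext x
    simp [Set.Iio, not_le]
  have hInt : ∀ t : ℝ, 0 ≤ t →
      Integrable (fun l : ℝ => l * Real.exp (-2 * l * t)) μ := by
    intro t ht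
    refine hG0.norm.mono' ((measurable_id.mul (Real.measurable_exp.comp
      ((measurable_id.const_mul (-2)).mul_const t))).aestronglyMeasurable) ?_
    filter_upwards [hae0] with l hl
    have he : Real.exp (-2 * l * t) ≤ 1 := by
      apply Real.exp_le_one_iff.2
      nlinarith
    have he0 : 0 ≤ Real.exp (-2 * l * t) := Real.exp_nonneg _
    calc ‖l * Real.exp (-2 * l * t)‖ = |l| * Real.exp (-2 * l * t) := by
          rw [norm_mul, Real.norm_eq_abs, Real.norm_eq_abs, abs_of_nonneg he0]
      _ ≤ |l| * 1 := by gcongr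
      _ = ‖l‖ := by simp
  -- no mass in Ioc ε β for 0 < ε, β < α
  have hseg : ∀ ε β : ℝ, 0 < ε → β < α → μ (Set.Ioc ε β) = 0 := by
    intro ε β hε hβ
    set M := (μ (Set.Ioc ε β)).toReal with hM
    have hM0 : 0 ≤ M := ENNReal.toReal_nonneg
    have key : ∀ t : ℝ, 0 ≤ t → ε * M ≤ C * Real.exp (2 * (β - α) * t) := by
      intro t ht
      have h1 : ε * Real.exp (-2 * β * t) * M
          ≤ ∫ l in Set.Ioc ε β, l * Real.exp (-2 * l * t) ∂μ := by
        have hc : ∫ l in Set.Ioc ε β, ε * Real.exp (-2 * β * t) ∂μ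
            = ε * Real.exp (-2 * β * t) * M := by
          rw [setIntegral_const, smul_eq_mul, mul_comm]; rfl
        rw [← hc]
        refine setIntegral_mono_on (integrable_const _).integrableOn
          ((hInt t ht).integrableOn) measurableSet_Ioc ?_
        intro l hl
        have hl1 : ε ≤ l := le_of_lt hl.1
        have hl2 : l ≤ β := hl.2
        have : Real.exp (-2 * β * t) ≤ Real.exp (-2 * l * t) := by
          apply Real.exp_le_exp.2; nlinarith
        have h0l : 0 ≤ l := le_trans (le_of_lt hε) hl1
        exact mul_le_mul hl1 this (Real.exp_nonneg _) h0l
      have h2 : ∫ l in Set.Ioc ε β, l * Real.exp (-2 * l * t) ∂μ ≤ G t := by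
        rw [hG]
        refine setIntegral_le_integral (hInt t ht) ?_
        filter_upwards [hae0] with l hl
        exact mul_nonneg hl (Real.exp_nonneg _)
      have h3 := hdecay t ht
      have h4 : ε * Real.exp (-2 * β * t) * M ≤ C * Real.exp (-2 * α * t) := by
        linarith
      have hE : Real.exp (2 * (β - α) * t) * Real.exp (-2 * β * t)
          = Real.exp (-2 * α * t) := by
        rw [← Real.exp_add]; congr 1; ring
      have hep : 0 < Real.exp (-2 * β * t) := Real.exp_pos _
      nlinarith [h4, hE, hep]
    have hlim : Tendsto (fun t : ℝ => C * Real.exp (2 * (β - α) * t)) atTop (nhds 0) := by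
      have : Tendsto (fun t : ℝ => Real.exp (2 * (β - α) * t)) atTop (nhds 0) := by
        apply Real.tendsto_exp_atBot.comp
        apply Tendsto.const_mul_atTop_of_neg (by linarith) tendsto_id
      simpa using this.const_mul C
    have hεM : ε * M ≤ 0 :=
      ge_of_tendsto hlim (eventually_atTop.2 ⟨0, fun t ht => key t ht⟩)
    have hMz : M = 0 := le_antisymm (by nlinarith) hM0
    rw [hM] at hMz
    exact ((ENNReal.toReal_eq_zero_iff _).1 hMz).resolve_right (measure_ne_top μ _)
  -- no mass in Ioo 0 α
  have hIoo : μ (Set.Ioo 0 α) = 0 := by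
    have hcov : Set.Ioo 0 α ⊆ ⋃ n : ℕ, Set.Ioc (1 / (n + 1) : ℝ) (α - α / (n + 1)) := by
      intro x hx
      obtain ⟨hx0, hxα⟩ := hx
      obtain ⟨n, hn⟩ := exists_nat_gt (max (1 / x) (α / (α - x)))
      have hn1 : (1 / x : ℝ) < n := lt_of_le_of_lt (le_max_left _ _) hn
      have hn2 : (α / (α - x) : ℝ) < n := lt_of_le_of_lt (le_max_right _ _) hn
      have hnpos : (0 : ℝ) < n := lt_trans (by positivity) hn1
      have hαx : 0 < α - x := by linarith
      refine Set.mem_iUnion.2 ⟨n, ?_, ?_⟩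
      · have : (1 : ℝ) < n * x := by
          rw [div_lt_iff₀ hx0] at hn1; linarith
        rw [div_lt_iff₀ (by positivity)]
        nlinarith
      · have : α < n * (α - x) := by
          rw [div_lt_iff₀ hαx] at hn2; linarith
        rw [le_sub_iff_add_le, ← le_sub_iff_add_le', div_le_iff₀ (by positivity)]
        nlinarith
    refine measure_mono_null hcov (measure_iUnion_null fun n => ?_)
    by_cases h : α - α / (n + 1) < α
    · exact hseg _ _ (by positivity) h
    · exfalso; apply h; have : (0:ℝ) < α / (n+1) := by positivity
      linarith
  have hae2 : ∀ᵐ l ∂μ, l ∉ Set.Ioo (0:ℝ) α := by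
    rw [ae_iff]
    simpa [Set.Ioo] using hIoo
  intro s hs
  rw [hG s, hG 0]
  have hG0' : (∫ l, l * Real.exp (-2 * l * 0) ∂μ) = ∫ l, l ∂μ := by
    congr 1; ext l; simp
  rw [hG0', ← integral_const_mul]
  refine integral_mono_ae (hInt s hs) (hG0.const_mul _) ?_
  filter_upwards [hae0, hae2] with l hl0 hl2
  rcases eq_or_lt_of_le hl0 with h | h
  · simp [← h]
  · have hlα : α ≤ l := by
      by_contra hc
      exact hl2 ⟨h, lt_of_not_ge hc⟩
    have : Real.exp (-2 * l * s) ≤ Real.exp (-2 * α * s) := by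
      apply Real.exp_le_exp.2; nlinarith
    calc l * Real.exp (-2 * l * s) ≤ l * Real.exp (-2 * α * s) := by
          apply mul_le_mul_of_nonneg_left this (le_of_lt h)
      _ = Real.exp (-2 * α * s) * l := mul_comm _ _
end

section
/- Let ρ0 > 0, ρ⁻ ≥ 0, κ ≥ 0, ρ2 > 0 and let t0 = min(1/ρ0, 1/ρ⁻) (interpreted as 1/ρ0 if ρ⁻ = 0). Suppose P ≥ (2/((1/2 + κ/ρ2 + ρ⁻ t)√t)) · m · min( min(ρ0 t/8, 1/4)·ln(1/m), 1/2 ) for all t ∈ (0, t0], where 0 < m ≤ 1/2. Then P ≥ (ln 2 / (4(3 + 2κ/ρ2))) · min(√ρ0, ρ0/√ρ⁻) · m · (ln(1/m))^{1/2}, where min(√ρ0, ρ0/√ρ⁻) is interpreted as √ρ0 when ρ⁻ = 0. -/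
set_option maxHeartbeats 2000000


theorem stmt_14 (ρ0 ρm κ ρ2 P m : ℝ)
    (hρ0 : 0 < ρ0) (hρm : 0 ≤ ρm) (hκ : 0 ≤ κ) (hρ2 : 0 < ρ2)
    (t0 : ℝ) (ht0 : t0 = if ρm = 0 then 1 / ρ0 else min (1 / ρ0) (1 / ρm))
    (hm : 0 < m) (hm12 : m ≤ 1 / 2)
    (hP : ∀ t : ℝ, 0 < t → t ≤ t0 →
      P ≥ (2 / ((1 / 2 + κ / ρ2 + ρm * t) * Real.sqrt t)) * m
        * min (min (ρ0 * t / 8) (1 / 4) * Real.log (1 / m)) (1 / 2)) :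
    P ≥ (Real.log 2 / (4 * (3 + 2 * κ / ρ2)))
      * (if ρm = 0 then Real.sqrt ρ0 else min (Real.sqrt ρ0) (ρ0 / Real.sqrt ρm))
      * m * Real.sqrt (Real.log (1 / m)) := by
  have hκρ : 0 ≤ κ / ρ2 := by positivity
  have ht0pos : 0 < t0 := by
    rw [ht0]; split_ifs with h
    · positivity
    · have hρm' : 0 < ρm := lt_of_le_of_ne hρm (Ne.symm h)
      exact lt_min (by positivity) (by positivity)
  have ht0le : t0 ≤ 1 / ρ0 := by
    rw [ht0]; split_ifs with h
    · exact le_rfl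
    · exact min_le_left _ _
  have h1 : ρ0 * t0 ≤ 1 := by
    have := mul_le_mul_of_nonneg_left ht0le hρ0.le
    rwa [mul_one_div, div_self hρ0.ne'] at this
  have h2 : ρm * t0 ≤ 1 := by
    rcases eq_or_lt_of_le hρm with h | h
    · simp [← h]
    · have ht0le' : t0 ≤ 1 / ρm := by
        rw [ht0, if_neg h.ne']; exact min_le_right _ _
      have := mul_le_mul_of_nonneg_left ht0le' h.le
      rwa [mul_one_div, div_self h.ne'] at this
  have hdiv2 : 2 * κ / ρ2 = 2 * (κ / ρ2) := mul_div_assoc 2 κ ρ2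
  set L := Real.log (1 / m) with hLdef
  have hL2 : Real.log 2 ≤ L := by
    apply Real.log_le_log two_pos
    rw [le_div_iff₀ hm]; linarith
  have hlog2pos : 0 < Real.log 2 := Real.log_pos (by norm_num)
  have hlog2lt : Real.log 2 < 1 := by
    have := Real.log_two_lt_d9; linarith
  have hLpos : 0 < L := lt_of_lt_of_le hlog2pos hL2
  set s := Real.sqrt t0 with hsdef
  have hs : 0 < s := Real.sqrt_pos.mpr ht0pos
  have hs2 : s * s = t0 := Real.mul_self_sqrt ht0pos.le
  have hs2' : s ^ 2 = t0 := Real.sq_sqrt ht0pos.le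
  set r := Real.sqrt L with hrdef
  have hr : 0 < r := Real.sqrt_pos.mpr hLpos
  have hr2 : r * r = L := Real.mul_self_sqrt hLpos.le
  have hr2' : r ^ 2 = L := Real.sq_sqrt hLpos.le
  have hrln2 : Real.log 2 / 2 ≤ r := by
    nlinarith [hr2, hL2, hr.le, hlog2lt, hlog2pos]
  have keyρm : ∀ x : ℝ, ρ0 * Real.sqrt (1 / x) = ρ0 / Real.sqrt x := by
    intro x
    rw [one_div, Real.sqrt_inv, div_eq_mul_inv]
  have keyρ0 : ρ0 * Real.sqrt (1 / ρ0) = Real.sqrt ρ0 := by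
    rw [keyρm ρ0, Real.div_sqrt]
  have hC : (if ρm = 0 then Real.sqrt ρ0 else min (Real.sqrt ρ0) (ρ0 / Real.sqrt ρm))
      = ρ0 * s := by
    rcases eq_or_lt_of_le hρm with h | h
    · rw [if_pos h.symm, hsdef, ht0, if_pos h.symm, keyρ0]
    · have hmono : Monotone Real.sqrt := fun a b hab => Real.sqrt_le_sqrt hab
      rw [if_neg h.ne', hsdef, ht0, if_neg h.ne', hmono.map_min,
        mul_min_of_nonneg _ _ hρ0.le, keyρ0, keyρm ρm]
  rw [hC, ge_iff_le]
  set D := 3 + 2 * κ / ρ2 with hDdef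
  clear_value L s r
  have hDpos : 0 < D := by rw [hDdef]; linarith [hdiv2]
  set c := Real.log 2 / (4 * D) with hcdef
  clear_value D
  have hcpos : 0 < c := by rw [hcdef]; positivity
  clear_value c
  have hcD : c * (D / 2) = Real.log 2 / 8 := by
    rw [hcdef]; field_simp; ring
  rcases le_or_gt L 4 with hL4 | hL4
  · -- t = t0
    refine le_trans ?_ (hP t0 ht0pos le_rfl)
    rw [min_eq_left (show ρ0 * t0 / 8 ≤ 1 / 4 by nlinarith),
      min_eq_left (show ρ0 * t0 / 8 * L ≤ 1 / 2 by nlinarith [mul_pos hρ0 ht0pos])]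
    rw [← hsdef]
    set d := 1 / 2 + κ / ρ2 + ρm * t0 with hddef
    have hdpos : 0 < d := by
      have : 0 ≤ ρm * t0 := mul_nonneg hρm ht0pos.le
      rw [hddef]; linarith
    clear_value d
    have hdle : d ≤ D / 2 := by rw [hddef, hDdef]; linarith [hdiv2]
    have hcd : c * d ≤ r / 4 := by
      have h4 : c * d ≤ c * (D / 2) := mul_le_mul_of_nonneg_left hdle hcpos.le
      rw [hcD] at h4
      linarith
    rw [div_mul_eq_mul_div, div_mul_eq_mul_div, le_div_iff₀ (by positivity)]
    rw [← hs2, ← hr2]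
    linarith [mul_le_mul_of_nonneg_right hcd
      (show (0:ℝ) ≤ ρ0 * m * r * (s * s) by positivity)]
  · -- t = 4*t0/L
    have ht : 0 < 4 * t0 / L := by positivity
    have htle : 4 * t0 / L ≤ t0 := by
      rw [div_le_iff₀ hLpos]; nlinarith
    refine le_trans ?_ (hP _ ht htle)
    have hm1 : min (ρ0 * (4 * t0 / L) / 8) (1 / 4) = ρ0 * (4 * t0 / L) / 8 := by
      apply min_eq_left
      have : ρ0 * (4 * t0 / L) ≤ ρ0 * t0 := mul_le_mul_of_nonneg_left htle hρ0.le
      linarith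
    have hm2 : min (ρ0 * (4 * t0 / L) / 8 * L) (1 / 2) = ρ0 * t0 / 2 := by
      have e : ρ0 * (4 * t0 / L) / 8 * L = ρ0 * t0 / 2 := by
        field_simp; ring
      rw [e]; exact min_eq_left (by linarith)
    rw [hm1, hm2]
    have hsq : Real.sqrt (4 * t0 / L) = 2 * s / r := by
      rw [show 4 * t0 / L = (2 * s / r) ^ 2 by
        rw [div_pow, mul_pow, hs2', hr2']; norm_num]
      exact Real.sqrt_sq (by positivity)
    rw [hsq]
    set d := 1 / 2 + κ / ρ2 + ρm * (4 * t0 / L) with hddef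
    clear_value d
    have hdpos : 0 < d := by
      have : 0 ≤ ρm * (4 * t0 / L) := mul_nonneg hρm ht.le
      rw [hddef]; linarith
    have hdle : d ≤ D / 2 := by
      have hh : ρm * (4 * t0 / L) ≤ ρm * t0 := mul_le_mul_of_nonneg_left htle hρm
      rw [hddef, hDdef]; linarith [hdiv2]
    have hcd : c * d ≤ 1 / 4 := by
      have h4 : c * d ≤ c * (D / 2) := mul_le_mul_of_nonneg_left hdle hcpos.le
      rw [hcD] at h4
      linarith
    rw [div_mul_eq_mul_div, div_mul_eq_mul_div, le_div_iff₀ (by positivity)]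
    have lhseq : c * (ρ0 * s) * m * r * (d * (2 * s / r))
        = 2 * (c * d) * (ρ0 * m * (s * s)) := by
      field_simp
    rw [lhseq, ← hs2]
    linarith [mul_le_mul_of_nonneg_right hcd
      (show (0:ℝ) ≤ ρ0 * m * (s * s) by positivity),
      show (0:ℝ) ≤ ρ0 * m * (s * s) by positivity]
end

section
/- Let t > 0 and let f be a positive measurable function with 2^{-n}-th powers well-defined. If for each n ≥ 1 a Markov operator P satisfies P(f^{2^{-n}})(x) ≤ (P f (y))^{2^{-n}} exp(C/(2^n - 1)) for a constant C ≥ 0, and inf f > 0, f bounded, then P(ln f)(x) ≤ ln(P f (y)) + C, using P(ln f) = lim_{n→∞} P((f^{2^{-n}} - 1)/2^{-n}) and lim_{n→∞} (a^{2^{-n}} - 1)/2^{-n} = ln a for a > 0. -/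
open Filter

set_option maxHeartbeats 1000000 in
theorem stmt_19 {M : Type*} (P : (M → ℝ) → (M → ℝ))
    (f : M → ℝ) (hfpos : ∃ ε > 0, ∀ z, ε ≤ f z) (hfbdd : ∃ B, ∀ z, f z ≤ B)
    (x y : M) (C : ℝ) (hC : 0 ≤ C)
    (hPfy : 0 < P f y)
    -- Wang's Harnack inequality applied to exponents 2^{-n}
    (hHarnack : ∀ n : ℕ, 1 ≤ n →
      P (fun z => f z ^ ((2 : ℝ) ^ (-(n : ℝ)))) x
        ≤ (P f y) ^ ((2 : ℝ) ^ (-(n : ℝ))) * Real.exp (C / (2 ^ n - 1)))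
    -- P is affine: P((g - c)/h) = (P g - c)/h
    (haffine : ∀ (g : M → ℝ) (c h : ℝ), h ≠ 0 →
      P (fun z => (g z - c) / h) x = (P g x - c) / h)
    -- P(ln f) = lim_{n→∞} P((f^{2^{-n}} - 1)/2^{-n}) (dominated convergence)
    (hlim : Tendsto
      (fun n : ℕ => P (fun z => (f z ^ ((2 : ℝ) ^ (-(n : ℝ))) - 1) / (2 : ℝ) ^ (-(n : ℝ))) x)
      atTop (nhds (P (fun z => Real.log (f z)) x))) :
    P (fun z => Real.log (f z)) x ≤ Real.log (P f y) + C := by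
  set a : ℝ := P f y with ha_def
  set L : ℝ := Real.log a
  -- h_n := 2^{-n}
  set hfun : ℕ → ℝ := fun n => (2 : ℝ) ^ (-(n : ℝ)) with hfun_def
  have hpos : ∀ n, 0 < hfun n := fun n => Real.rpow_pos_of_pos (by norm_num) _
  have hval : ∀ n : ℕ, hfun n = ((1:ℝ)/2) ^ n := by
    intro n
    show (2:ℝ) ^ (-(n:ℝ)) = ((1:ℝ)/2) ^ n
    rw [Real.rpow_neg (by norm_num), Real.rpow_natCast]
    rw [one_div, inv_pow]
  have htend0 : Tendsto hfun atTop (nhds 0) := by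
    rw [show hfun = fun n => ((1:ℝ)/2) ^ n from funext hval]
    exact tendsto_pow_atTop_nhds_zero_of_lt_one (by norm_num) (by norm_num)
  have hpowtend : Tendsto (fun n : ℕ => ((2:ℝ) ^ n - 1)) atTop atTop :=
    (tendsto_pow_atTop_atTop_of_one_lt (by norm_num)).atTop_add tendsto_const_nhds
  have hCtend : Tendsto (fun n : ℕ => C / ((2:ℝ) ^ n - 1)) atTop (nhds 0) :=
    Tendsto.div_atTop tendsto_const_nhds hpowtend
  -- candidate dominating sequence
  set c : ℕ → ℝ := fun n =>
    (L + C / (1 - hfun n)) * Real.exp (hfun n * L + C / ((2:ℝ) ^ n - 1)) with hc_def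
  have hctend : Tendsto c atTop (nhds (L + C)) := by
    have h1 : Tendsto (fun n => L + C / (1 - hfun n)) atTop (nhds (L + C)) := by
      have : Tendsto (fun n => C / (1 - hfun n)) atTop (nhds (C / (1 - 0))) :=
        (tendsto_const_nhds).div (tendsto_const_nhds.sub htend0) (by norm_num)
      simpa using tendsto_const_nhds.add this
    have h2 : Tendsto (fun n => Real.exp (hfun n * L + C / ((2:ℝ) ^ n - 1))) atTop
        (nhds 1) := by
      have : Tendsto (fun n => hfun n * L + C / ((2:ℝ) ^ n - 1)) atTop (nhds 0) := by
        simpa using (htend0.mul_const L).add hCtend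
      simpa [Function.comp_def] using (Real.continuous_exp.tendsto 0).comp this
    simpa using h1.mul h2
  refine le_of_tendsto_of_tendsto hlim hctend ?_
  filter_upwards [eventually_ge_atTop 1] with n hn
  have hne : hfun n ≠ 0 := (hpos n).ne'
  have h2n : (2:ℝ) ≤ (2:ℝ) ^ n := by
    calc (2:ℝ) = 2 ^ 1 := (pow_one 2).symm
    _ ≤ 2 ^ n := pow_le_pow_right₀ (by norm_num) hn
  have hsub : (0:ℝ) < (2:ℝ) ^ n - 1 := by linarith
  -- rewrite via affinity
  rw [haffine _ 1 _ hne]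
  set s : ℝ := hfun n * L + C / ((2:ℝ) ^ n - 1) with hs_def
  have hprod : (2:ℝ) ^ n * hfun n = 1 := by
    rw [hfun_def]
    rw [← Real.rpow_natCast 2 n, ← Real.rpow_add (by norm_num)]
    simp
  have hkey : a ^ hfun n * Real.exp (C / ((2:ℝ) ^ n - 1)) = Real.exp s := by
    rw [Real.rpow_def_of_pos hPfy, ← Real.exp_add]
    congr 1
    rw [hs_def]; ring
  have hH := hHarnack n hn
  have step1 : (P (fun z => f z ^ hfun n) x - 1) / hfun n ≤ (Real.exp s - 1) / hfun n := by
    apply div_le_div_of_nonneg_right _ (hpos n).le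
    · rw [← hkey]; linarith [hH]
  refine step1.trans ?_
  -- exp s - 1 ≤ s * exp s
  have hexp : Real.exp s - 1 ≤ s * Real.exp s := by
    have h1 := Real.add_one_le_exp (-s)
    have h2 := Real.exp_pos s
    have h3 : Real.exp (-s) * Real.exp s = 1 := by
      rw [← Real.exp_add]; simp
    nlinarith
  have step2 : (Real.exp s - 1) / hfun n ≤ s * Real.exp s / hfun n :=
    div_le_div_of_nonneg_right hexp (hpos n).le
  refine step2.trans ?_
  -- s * exp s / h_n = c n
  refine le_of_eq ?_
  have h1mh : 1 - hfun n = ((2:ℝ) ^ n - 1) * hfun n := by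
    rw [sub_mul, hprod]; ring
  have hratio : s / hfun n = L + C / (1 - hfun n) := by
    rw [hs_def, h1mh]
    field_simp
  show s * Real.exp s / hfun n = (L + C / (1 - hfun n)) * Real.exp s
  rw [mul_comm s, mul_div_assoc, hratio, mul_comm]
end
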